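/- Let m be a positive integer and 0 ≤ k ≤ m. Let U₁ be the (0,1)-matrix of order 2m whose entries at positions (i,j) with |i−j| = 1 equal 1 and all of whose other entries are zero. Then Σ_{α ∈ Q_{2k,2m}} Hf(U₁(α)) = C(m+k, m−k), where for α ∈ Q_{2m,2m} the hafnian of the empty matrix U₁(α) is taken to be 1. -/

import Mathlib

/-- The hafnian of a matrix over a linearly ordered finite index type:
the sum over all fixed-point-free involutions `σ` of the product of the
entries `A i (σ i)`, taken over one representative `i < σ i` of each orbit.
(For the empty index type this is `1`.) -/
def hafnian {ι : Type*} [Fintype ι] [LinearOrder ι] {R : Type*} [CommSemiring R]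
    (A : Matrix ι ι R) : R :=
  ∑ σ ∈ Finset.univ.filter
      (fun σ : Equiv.Perm ι => σ * σ = 1 ∧ ∀ i, σ i ≠ i),
    ∏ i ∈ Finset.univ.filter (fun i => i < σ i), A i (σ i)

/-- The `(0,1)`-matrix `U₁` of order `n`: entries `1` exactly at the positions `(i,j)`
with `|i - j| = 1`, and `0` elsewhere. -/
def U₁ (n : ℕ) : Matrix (Fin n) (Fin n) ℕ :=
  fun i j => if (i : ℕ) + 1 = (j : ℕ) ∨ (j : ℕ) + 1 = (i : ℕ) then 1 else 0

def cover (D : Finset ℕ) : Finset ℕ := D ∪ D.image (· + 1)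

def alphaOf (n : ℕ) (D : Finset ℕ) : Finset (Fin n) :=
  Finset.univ.filter (fun x => (x : ℕ) ∉ cover D)

lemma mem_alphaOf {n : ℕ} {D : Finset ℕ} {x : Fin n} :
    x ∈ alphaOf n D ↔ (x : ℕ) ∉ cover D := by
  simp [alphaOf]

def permOfFun (n : ℕ) (α : Finset (Fin n)) (D : Finset ℕ)
    (hsp : ∀ i ∈ D, i + 1 ∉ D ∧ i + 1 < n)
    (hcov : ∀ x : Fin n, x ∉ α ↔ (x : ℕ) ∈ cover D) :
    {x : Fin n // x ∉ α} → {x : Fin n // x ∉ α} := fun x =>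
  if h : ((x : Fin n) : ℕ) ∈ D then
    ⟨⟨((x : Fin n) : ℕ) + 1, (hsp _ h).2⟩, by
      rw [hcov]
      exact Finset.mem_union_right _ (Finset.mem_image.mpr ⟨_, h, rfl⟩)⟩
  else
    ⟨⟨((x : Fin n) : ℕ) - 1, lt_of_le_of_lt (Nat.sub_le _ _) (x : Fin n).isLt⟩, by
      rw [hcov]
      have hx : ((x : Fin n) : ℕ) ∈ cover D := (hcov _).mp x.2
      rcases Finset.mem_union.mp hx with h' | h'
      · exact absurd h' h
      · obtain ⟨j, hj, hj2⟩ := Finset.mem_image.mp h'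
        apply Finset.mem_union_left
        show ((x : Fin n) : ℕ) - 1 ∈ D
        have e : ((x : Fin n) : ℕ) - 1 = j := by omega
        rw [e]; exact hj⟩

lemma permOfFun_val {n : ℕ} {α : Finset (Fin n)} {D : Finset ℕ}
    {hsp : ∀ i ∈ D, i + 1 ∉ D ∧ i + 1 < n}
    {hcov : ∀ x : Fin n, x ∉ α ↔ (x : ℕ) ∈ cover D}
    (x : {x : Fin n // x ∉ α}) :
    ((permOfFun n α D hsp hcov x : Fin n) : ℕ)
      = if ((x : Fin n) : ℕ) ∈ D then ((x : Fin n) : ℕ) + 1 else ((x : Fin n) : ℕ) - 1 := by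
  unfold permOfFun
  split <;> rfl

lemma val_pos_of_not_mem {n : ℕ} {α : Finset (Fin n)} {D : Finset ℕ}
    (hcov : ∀ x : Fin n, x ∉ α ↔ (x : ℕ) ∈ cover D)
    (x : {x : Fin n // x ∉ α}) (h : ((x : Fin n) : ℕ) ∉ D) :
    ((x : Fin n) : ℕ) - 1 ∈ D ∧ 1 ≤ ((x : Fin n) : ℕ) := by
  have hx : ((x : Fin n) : ℕ) ∈ cover D := (hcov _).mp x.2
  rcases Finset.mem_union.mp hx with h' | h'
  · exact absurd h' h
  · obtain ⟨j, hj, hj2⟩ := Finset.mem_image.mp h'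
    have e : ((x : Fin n) : ℕ) - 1 = j := by omega
    exact ⟨e ▸ hj, by omega⟩

lemma permOfFun_involutive {n : ℕ} {α : Finset (Fin n)} {D : Finset ℕ}
    (hsp : ∀ i ∈ D, i + 1 ∉ D ∧ i + 1 < n)
    (hcov : ∀ x : Fin n, x ∉ α ↔ (x : ℕ) ∈ cover D) :
    Function.Involutive (permOfFun n α D hsp hcov) := by
  intro x
  apply Subtype.ext
  apply Fin.ext
  rw [permOfFun_val, permOfFun_val]
  by_cases h : ((x : Fin n) : ℕ) ∈ D
  · rw [if_pos h, if_neg (hsp _ h).1]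
    omega
  · obtain ⟨hmem, hpos⟩ := val_pos_of_not_mem hcov x h
    rw [if_neg h, if_pos hmem]
    omega

def permOf (n : ℕ) (α : Finset (Fin n)) (D : Finset ℕ)
    (hsp : ∀ i ∈ D, i + 1 ∉ D ∧ i + 1 < n)
    (hcov : ∀ x : Fin n, x ∉ α ↔ (x : ℕ) ∈ cover D) :
    Equiv.Perm {x : Fin n // x ∉ α} :=
  Function.Involutive.toPerm (permOfFun n α D hsp hcov) (permOfFun_involutive hsp hcov)

lemma permOf_val {n : ℕ} {α : Finset (Fin n)} {D : Finset ℕ}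
    (hsp : ∀ i ∈ D, i + 1 ∉ D ∧ i + 1 < n)
    (hcov : ∀ x : Fin n, x ∉ α ↔ (x : ℕ) ∈ cover D)
    (x : {x : Fin n // x ∉ α}) :
    ((permOf n α D hsp hcov x : Fin n) : ℕ)
      = if ((x : Fin n) : ℕ) ∈ D then ((x : Fin n) : ℕ) + 1 else ((x : Fin n) : ℕ) - 1 :=
  permOfFun_val (hsp := hsp) (hcov := hcov) x

-- half-cardinality for fixed-point-free involutions
lemma two_mul_card_filter_lt {ι : Type*} [Fintype ι] [LinearOrder ι]
    (σ : Equiv.Perm ι) (hinv : σ * σ = 1) (hfpf : ∀ i, σ i ≠ i) :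
    2 * (Finset.univ.filter (fun x => x < σ x)).card = Fintype.card ι := by
  have hss : ∀ j, σ (σ j) = j := fun j => by
    rw [← Equiv.Perm.mul_apply, hinv]; rfl
  have hneg : Finset.univ.filter (fun x => ¬ x < σ x)
      = Finset.univ.filter (fun x => σ x < x) := by
    apply Finset.filter_congr
    intro x _
    simp only [not_lt, eq_iff_iff]
    constructor
    · intro h; exact lt_of_le_of_ne h (hfpf x)
    · exact le_of_lt
  have hcardeq : (Finset.univ.filter (fun x => x < σ x)).card
      = (Finset.univ.filter (fun x => σ x < x)).card := by
    apply Finset.card_nbij (i := fun x => σ x)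
    · intro x hx
      simp only [Finset.mem_coe, Finset.mem_filter, Finset.mem_univ, true_and] at hx ⊢
      rwa [hss]
    · exact σ.injective.injOn
    · intro y hy
      simp only [Finset.coe_filter, Set.mem_setOf_eq, Finset.mem_univ, true_and] at hy
      refine ⟨σ y, ?_, hss y⟩
      simp only [Finset.coe_filter, Set.mem_setOf_eq, Finset.mem_univ, true_and]
      rwa [hss]
  have := Finset.card_filter_add_card_filter_not
    (s := (Finset.univ : Finset ι)) (fun x => x < σ x)
  rw [hneg, ← hcardeq] at this
  rw [← Finset.card_univ, ← this]
  ring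

lemma subtype_lt_iff {n : ℕ} {α : Finset (Fin n)} (x y : {x : Fin n // x ∉ α}) :
    x < y ↔ ((x : Fin n) : ℕ) < ((y : Fin n) : ℕ) := by
  rw [← Subtype.coe_lt_coe, Fin.lt_def]

lemma bij_card (n : ℕ) (α : Finset (Fin n)) (d : ℕ) (hd : α.card + 2 * d = n)
    (s : Finset (Equiv.Perm {x : Fin n // x ∉ α}))
    (hs : ∀ σ, σ ∈ s ↔ ((σ * σ = 1 ∧ ∀ i, σ i ≠ i) ∧
      ∀ i : {x : Fin n // x ∉ α}, ((i : Fin n) : ℕ) + 1 = ((σ i : Fin n) : ℕ) ∨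
        ((σ i : Fin n) : ℕ) + 1 = ((i : Fin n) : ℕ)))
    (t : Finset (Finset ℕ))
    (ht : ∀ D, D ∈ t ↔ (D ⊆ Finset.range n ∧ (D.card = d ∧ ∀ i ∈ D, i + 1 ∉ D ∧ i + 1 < n)
      ∧ alphaOf n D = α)) :
    s.card = t.card := by
  have vinj : ∀ (a b : {x : Fin n // x ∉ α}),
      ((a : Fin n) : ℕ) = ((b : Fin n) : ℕ) → a = b :=
    fun a b h => Subtype.ext (Fin.ext h)
  set dom : Equiv.Perm {x : Fin n // x ∉ α} → Finset ℕ := fun σ =>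
    (Finset.univ.filter (fun x => x < σ x)).image
      (fun x : {x : Fin n // x ∉ α} => ((x : Fin n) : ℕ)) with hdom
  have mem_dom : ∀ (σ : Equiv.Perm {x : Fin n // x ∉ α}) (a : ℕ),
      a ∈ dom σ ↔ ∃ x, x < σ x ∧ ((x : Fin n) : ℕ) = a := by
    intro σ a
    simp [hdom]
  -- facts about a good σ
  have key : ∀ σ ∈ s,
      (∀ a ∈ dom σ, a + 1 ∉ dom σ ∧ a + 1 < n) ∧
      (∀ x : Fin n, x ∉ α ↔ (x : ℕ) ∈ cover (dom σ)) ∧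
      (dom σ).card = d ∧ dom σ ⊆ Finset.range n := by
    intro σ hσ
    obtain ⟨⟨hσ1, hσ2⟩, hσ3⟩ := (hs σ).mp hσ
    have hssq : ∀ j, σ (σ j) = j := fun j => by
      rw [← Equiv.Perm.mul_apply, hσ1]; rfl
    have hadj : ∀ x, x < σ x → ((σ x : Fin n) : ℕ) = ((x : Fin n) : ℕ) + 1 := by
      intro x hx
      rw [subtype_lt_iff] at hx
      rcases hσ3 x with h | h
      · omega
      · omega
    have hsp' : ∀ a ∈ dom σ, a + 1 ∉ dom σ ∧ a + 1 < n := by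
      intro a ha
      obtain ⟨x, hx, hxa⟩ := (mem_dom σ a).mp ha
      have hxv := hadj x hx
      constructor
      · intro hcon
        obtain ⟨y, hy, hya⟩ := (mem_dom σ (a+1)).mp hcon
        have : y = σ x := vinj _ _ (by omega)
        subst this
        rw [subtype_lt_iff, hssq] at hy
        rw [subtype_lt_iff] at hx
        omega
      · have := (σ x : Fin n).isLt
        omega
    refine ⟨hsp', ?_, ?_, ?_⟩
    · intro x
      constructor
      · intro hx
        set y : {x : Fin n // x ∉ α} := ⟨x, hx⟩ with hy
        rcases lt_trichotomy y (σ y) with h | h | h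
        · exact Finset.mem_union_left _ ((mem_dom σ _).mpr ⟨y, h, rfl⟩)
        · exact absurd h.symm (hσ2 y)
        · apply Finset.mem_union_right
          have h1 : σ y < σ (σ y) := by rwa [hssq]
          have h2 := hadj (σ y) h1
          rw [hssq] at h2
          apply Finset.mem_image.mpr
          have hyx : ((y : Fin n) : ℕ) = (x : ℕ) := rfl
          exact ⟨((σ y : Fin n) : ℕ), (mem_dom σ _).mpr ⟨σ y, h1, rfl⟩, by omega⟩
      · intro hx
        rcases Finset.mem_union.mp hx with h | h
        · obtain ⟨y, hy, hya⟩ := (mem_dom σ _).mp h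
          have : x = (y : Fin n) := Fin.ext hya.symm
          rw [this]; exact y.2
        · obtain ⟨b, hb, hba⟩ := Finset.mem_image.mp h
          obtain ⟨y, hy, hya⟩ := (mem_dom σ _).mp hb
          have hxv : (x : ℕ) = ((σ y : Fin n) : ℕ) := by
            have := hadj y hy; omega
          have : x = (σ y : Fin n) := Fin.ext hxv
          rw [this]; exact (σ y).2
    · have himg : (dom σ).card = (Finset.univ.filter
          (fun x : {x : Fin n // x ∉ α} => x < σ x)).card := by
        rw [hdom]
        apply Finset.card_image_of_injOn
        exact fun a _ b _ h => vinj a b h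
      have h2 := two_mul_card_filter_lt σ hσ1 hσ2
      have h3 : Fintype.card {x : Fin n // x ∉ α} = n - α.card := by
        rw [Fintype.card_subtype_compl]
        simp [Fintype.card_coe]
      omega
    · intro a ha
      obtain ⟨x, hx, hxa⟩ := (mem_dom σ a).mp ha
      rw [Finset.mem_range]
      have := (x : Fin n).isLt
      omega
  apply Finset.card_nbij' (i := dom)
    (j := fun D => if h : (∀ i ∈ D, i + 1 ∉ D ∧ i + 1 < n) ∧
        (∀ x : Fin n, x ∉ α ↔ (x : ℕ) ∈ cover D) then permOf n α D h.1 h.2 else 1)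
  · -- dom maps s into t
    intro σ hσ
    obtain ⟨h1, h2, h3, h4⟩ := key σ hσ
    refine (ht _).mpr ⟨h4, ⟨h3, h1⟩, ?_⟩
    ext x
    rw [mem_alphaOf]
    have := h2 x
    tauto
  · -- j maps t into s
    intro D hD
    obtain ⟨hsub, ⟨hcard, hsp⟩, halpha⟩ := (ht D).mp hD
    have hcov : ∀ x : Fin n, x ∉ α ↔ (x : ℕ) ∈ cover D := by
      intro x
      rw [← halpha, mem_alphaOf]
      tauto
    beta_reduce
    rw [dif_pos ⟨hsp, hcov⟩]
    apply (hs _).mpr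
    refine ⟨⟨?_, ?_⟩, ?_⟩
    · apply Equiv.ext
      intro x
      rw [Equiv.Perm.mul_apply]
      exact permOfFun_involutive hsp hcov x
    · intro x heq
      have hv := permOf_val hsp hcov x
      rw [heq] at hv
      by_cases h : ((x : Fin n) : ℕ) ∈ D
      · rw [if_pos h] at hv; omega
      · rw [if_neg h] at hv
        have := (val_pos_of_not_mem hcov x h).2
        omega
    · intro x
      have hv := permOf_val hsp hcov x
      by_cases h : ((x : Fin n) : ℕ) ∈ D
      · rw [if_pos h] at hv; left; omega
      · rw [if_neg h] at hv
        have := (val_pos_of_not_mem hcov x h).2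
        right; omega
  · -- left inverse
    intro σ hσ
    obtain ⟨h1, h2, h3, h4⟩ := key σ hσ
    obtain ⟨⟨hσ1, hσ2⟩, hσ3⟩ := (hs σ).mp hσ
    have hcov : ∀ x : Fin n, x ∉ α ↔ (x : ℕ) ∈ cover (dom σ) := h2
    beta_reduce
    rw [dif_pos ⟨h1, hcov⟩]
    apply Equiv.ext
    intro x
    apply vinj
    rw [permOf_val h1 hcov x]
    by_cases h : ((x : Fin n) : ℕ) ∈ dom σ
    · rw [if_pos h]
      obtain ⟨y, hy, hya⟩ := (mem_dom σ _).mp h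
      have : y = x := vinj _ _ hya
      subst this
      rw [subtype_lt_iff] at hy
      rcases hσ3 y with hh | hh
      · omega
      · omega
    · rw [if_neg h]
      have hne : σ x ≠ x := hσ2 x
      have hnlt : ¬ x < σ x := fun hcon => h ((mem_dom σ _).mpr ⟨x, hcon, rfl⟩)
      have hlt : σ x < x := by
        rcases lt_trichotomy x (σ x) with hh | hh | hh
        · exact absurd hh hnlt
        · exact absurd hh.symm hne
        · exact hh
      rw [subtype_lt_iff] at hlt
      rcases hσ3 x with hh | hh
      · omega
      · omega
  · -- right inverse
    intro D hD
    obtain ⟨hsub, ⟨hcard, hsp⟩, halpha⟩ := (ht D).mp hD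
    have hcov : ∀ x : Fin n, x ∉ α ↔ (x : ℕ) ∈ cover D := by
      intro x
      rw [← halpha, mem_alphaOf]
      tauto
    beta_reduce
    rw [dif_pos ⟨hsp, hcov⟩]
    ext a
    rw [mem_dom]
    constructor
    · rintro ⟨x, hx, rfl⟩
      rw [subtype_lt_iff, permOf_val hsp hcov x] at hx
      by_cases h : ((x : Fin n) : ℕ) ∈ D
      · exact h
      · rw [if_neg h] at hx; omega
    · intro ha
      have han : a < n := Finset.mem_range.mp (hsub ha)
      have hxn : (⟨a, han⟩ : Fin n) ∉ α :=
        (hcov _).mpr (Finset.mem_union_left _ ha)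
      refine ⟨⟨⟨a, han⟩, hxn⟩, ?_, rfl⟩
      rw [subtype_lt_iff, permOf_val hsp hcov]
      simp only [ha, if_pos]
      omega

lemma hafnian_01 {ι : Type*} [Fintype ι] [LinearOrder ι] (A : Matrix ι ι ℕ)
    (hsym : ∀ i j, A i j = A j i) (h01 : ∀ i j, A i j ≤ 1) :
    hafnian A = (Finset.univ.filter (fun σ : Equiv.Perm ι =>
      (σ * σ = 1 ∧ ∀ i, σ i ≠ i) ∧ ∀ i, A i (σ i) = 1)).card := by
  unfold hafnian
  have step : ∀ σ ∈ Finset.univ.filter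
      (fun σ : Equiv.Perm ι => σ * σ = 1 ∧ ∀ i, σ i ≠ i),
      (∏ i ∈ Finset.univ.filter (fun i => i < σ i), A i (σ i))
      = if (∀ i, A i (σ i) = 1) then 1 else 0 := by
    intro σ hσ
    rw [Finset.mem_filter] at hσ
    obtain ⟨-, hinv, hfpf⟩ := hσ
    have hss : ∀ j, σ (σ j) = j := fun j => by
      rw [← Equiv.Perm.mul_apply, hinv]; rfl
    by_cases hQ : ∀ i, A i (σ i) = 1
    · rw [if_pos hQ]
      exact Finset.prod_eq_one (fun i _ => hQ i)
    · rw [if_neg hQ]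
      push_neg at hQ
      obtain ⟨i, hi⟩ := hQ
      have hzero : A i (σ i) = 0 := by have := h01 i (σ i); omega
      rcases lt_or_gt_of_ne (Ne.symm (hfpf i)) with h | h
      · exact Finset.prod_eq_zero (by simp [h]) hzero
      · refine Finset.prod_eq_zero (i := σ i) (by simp [hss i, h]) ?_
        rw [hss i, ← hsym]
        exact hzero
  refine (Finset.sum_congr rfl step).trans ?_
  rw [Finset.sum_boole, Nat.cast_id, Finset.filter_filter]


lemma card_filter_val_mem (n : ℕ) (s : Finset ℕ) (hs : ∀ i ∈ s, i < n) :
    (Finset.univ.filter (fun x : Fin n => (x : ℕ) ∈ s)).card = s.card := by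
  apply Finset.card_nbij (i := fun x : Fin n => (x : ℕ))
  · intro x hx
    simp only [Finset.mem_coe, Finset.mem_filter, Finset.mem_univ, true_and] at hx
    exact hx
  · intro a _ b _ h
    exact Fin.ext h
  · intro b hb
    simp only [Finset.mem_coe] at hb
    refine ⟨⟨b, hs b hb⟩, ?_, rfl⟩
    simp only [Finset.coe_filter, Set.mem_setOf_eq, Finset.mem_univ, true_and]
    exact hb

lemma card_alphaOf (n : ℕ) (D : Finset ℕ) (hsub : ∀ i ∈ D, i < n)
    (hsp : ∀ i ∈ D, i + 1 ∉ D ∧ i + 1 < n) :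
    (alphaOf n D).card = n - 2 * D.card := by
  have hdisj : Disjoint D (D.image (· + 1)) := by
    rw [Finset.disjoint_left]
    intro x hx hximg
    obtain ⟨j, hj, hj1⟩ := Finset.mem_image.mp hximg
    exact (hsp j hj).1 (hj1 ▸ hx)
  have hcov_card : (cover D).card = 2 * D.card := by
    rw [cover, Finset.card_union_of_disjoint hdisj,
      Finset.card_image_of_injective _ (fun a b h => by omega)]
    ring
  have hcov_lt : ∀ i ∈ cover D, i < n := by
    intro i hi
    rcases Finset.mem_union.mp hi with h | h
    · exact hsub i h
    · obtain ⟨j, hj, hj1⟩ := Finset.mem_image.mp h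
      have := (hsp j hj).2
      omega
  have hsplit := Finset.card_filter_add_card_filter_not
    (s := (Finset.univ : Finset (Fin n))) (fun x => (x : ℕ) ∈ cover D)
  rw [card_filter_val_mem n (cover D) hcov_lt] at hsplit
  have huniv : (Finset.univ : Finset (Fin n)).card = n := by simp
  have : (alphaOf n D).card = (Finset.univ.filter (fun x : Fin n => ¬ (x : ℕ) ∈ cover D)).card := rfl
  rw [this]
  omega

lemma sparse_count : ∀ (n d : ℕ),
    ((Finset.range n).powerset.filter
      (fun D => D.card = d ∧ ∀ i ∈ D, i + 1 ∉ D ∧ i + 1 < n)).card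
    = Nat.choose (n - d) d := by
  intro n
  induction n using Nat.strong_induction_on with
  | _ n ih =>
    intro d
    match d with
    | 0 =>
      have h : ((Finset.range n).powerset.filter
          (fun D => D.card = 0 ∧ ∀ i ∈ D, i + 1 ∉ D ∧ i + 1 < n)) = {∅} := by
        ext D
        simp only [Finset.mem_filter, Finset.mem_powerset, Finset.card_eq_zero,
          Finset.mem_singleton]
        constructor
        · rintro ⟨-, h, -⟩; exact h
        · rintro rfl; simp
      rw [h]; simp
    | d + 1 =>
      match n, ih with
      | 0, _ =>
        have h : ((Finset.range 0).powerset.filter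
            (fun D => D.card = d + 1 ∧ ∀ i ∈ D, i + 1 ∉ D ∧ i + 1 < 0)) = ∅ := by
          apply Finset.filter_eq_empty_iff.mpr
          intro D hD
          simp only [Finset.range_zero, Finset.powerset_empty, Finset.mem_singleton] at hD
          subst hD
          simp
        rw [h]
        simp [Nat.choose_eq_zero_of_lt]
      | 1, _ =>
        have h : ((Finset.range 1).powerset.filter
            (fun D => D.card = d + 1 ∧ ∀ i ∈ D, i + 1 ∉ D ∧ i + 1 < 1)) = ∅ := by
          apply Finset.filter_eq_empty_iff.mpr
          intro D hD
          rintro ⟨hcard, hsp⟩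
          obtain ⟨x, hx⟩ := Finset.card_pos.mp (by omega : 0 < D.card)
          exact absurd (hsp x hx).2 (by omega)
        rw [h]
        have : 1 - (d+1) = 0 := by omega
        rw [this]
        simp [Nat.choose_eq_zero_of_lt]
      | n + 2, ih =>
        set P : Finset ℕ → Prop := fun D => D.card = d + 1 ∧ ∀ i ∈ D, i + 1 ∉ D ∧ i + 1 < n + 2 with hP
        set S := (Finset.range (n+2)).powerset.filter P with hS
        have hsplit : (S.filter (fun D => n ∈ D)).card + (S.filter (fun D => n ∉ D)).card = S.card :=
          Finset.card_filter_add_card_filter_not _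
        have hwo : S.filter (fun D => n ∉ D)
            = (Finset.range (n+1)).powerset.filter
              (fun D => D.card = d + 1 ∧ ∀ i ∈ D, i + 1 ∉ D ∧ i + 1 < n + 1) := by
          ext D
          simp only [Finset.mem_coe, hS, hP, Finset.mem_filter, Finset.mem_powerset, Finset.subset_iff,
            Finset.mem_range]
          constructor
          · rintro ⟨⟨hsub, hcard, hsp⟩, hn⟩
            refine ⟨fun x hx => ?_, hcard, fun i hi => ⟨(hsp i hi).1, ?_⟩⟩
            · have := hsub hx
              rcases Nat.lt_or_ge x (n+1) with h | h
              · exact h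
              · have hx1 : x = n + 1 := by omega
                subst hx1
                exact absurd (hsp _ hx).2 (by omega)
            · have h1 := (hsp i hi).2
              have : i ≠ n := fun h => hn (h ▸ hi)
              omega
          · rintro ⟨hsub, hcard, hsp⟩
            refine ⟨⟨fun x hx => by have := hsub hx; omega, hcard,
              fun i hi => ⟨(hsp i hi).1, by have := (hsp i hi).2; omega⟩⟩, fun hn => ?_⟩
            exact absurd (hsp n hn).2 (by omega)
        have hwi : (S.filter (fun D => n ∈ D)).card
            = ((Finset.range n).powerset.filter
              (fun D => D.card = d ∧ ∀ i ∈ D, i + 1 ∉ D ∧ i + 1 < n)).card := by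
          apply Finset.card_nbij' (i := fun D => D.erase n) (j := fun D => insert n D)
          · rintro D hD
            simp only [Finset.mem_coe, hS, hP, Finset.mem_filter, Finset.mem_powerset, Finset.subset_iff,
              Finset.mem_range] at hD ⊢
            obtain ⟨⟨hsub, hcard, hsp⟩, hn⟩ := hD
            refine ⟨fun x hx => ?_, ?_, fun i hi => ⟨?_, ?_⟩⟩
            · rw [Finset.mem_erase] at hx
              obtain ⟨hxn, hxD⟩ := hx
              have h2 := (hsp x hxD).2
              have h1 := (hsp x hxD).1
              have : x + 1 ≠ n := fun h => h1 (h ▸ hn)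
              omega
            · rw [Finset.card_erase_of_mem hn]; omega
            · rw [Finset.mem_erase] at hi
              exact fun h => (hsp i hi.2).1 (Finset.erase_subset _ _ h)
            · rw [Finset.mem_erase] at hi
              obtain ⟨hin, hiD⟩ := hi
              have h2 := (hsp i hiD).2
              have h1 := (hsp i hiD).1
              have : i + 1 ≠ n := fun h => h1 (h ▸ hn)
              omega
          · rintro D hD
            simp only [Finset.mem_coe, Finset.mem_filter, Finset.mem_powerset, Finset.subset_iff,
              Finset.mem_range] at hD
            obtain ⟨hsub, hcard, hsp⟩ := hD
            have hnD : n ∉ D := fun h => absurd (hsub h) (by omega)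
            simp only [Finset.mem_coe, hS, hP, Finset.mem_filter, Finset.mem_powerset, Finset.subset_iff,
              Finset.mem_range, Finset.mem_insert]
            refine ⟨⟨fun x hx => ?_, ?_, fun i hi => ⟨?_, ?_⟩⟩, ?_⟩
            · rcases hx with rfl | hx
              · omega
              · have := hsub hx; omega
            · rw [Finset.card_insert_of_notMem hnD]; omega
            · rcases hi with rfl | hi
              · rintro (h | h)
                · omega
                · exact absurd (hsub h) (by omega)
              · rintro (h | h)
                · exact absurd (hsp i hi).2 (by omega)
                · exact (hsp i hi).1 h
            · rcases hi with rfl | hi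
              · omega
              · have := (hsp i hi).2; omega
            · simp
          · rintro D hD
            simp only [Finset.mem_coe, hS, hP, Finset.mem_filter] at hD
            exact Finset.insert_erase hD.2
          · rintro D hD
            simp only [Finset.mem_coe, Finset.mem_filter, Finset.mem_powerset, Finset.subset_iff,
              Finset.mem_range] at hD
            exact Finset.erase_insert (fun h => absurd (hD.1 h) (by omega))
        have h1 := ih (n+1) (by omega) (d+1)
        have h2 := ih n (by omega) d
        have key : Nat.choose (n - d) d + Nat.choose (n + 1 - (d + 1)) (d + 1)
            = Nat.choose (n + 2 - (d + 1)) (d + 1) := by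
          rcases Nat.lt_or_ge (d + 1) (n + 2) with h | h
          · have e1 : n + 2 - (d + 1) = (n + 1 - (d + 1)) + 1 := by omega
            have e2 : n - d = n + 1 - (d + 1) := by omega
            rw [e1, e2, Nat.choose_succ_succ']
          · have e1 : n + 2 - (d + 1) = 0 := by omega
            have e2 : n + 1 - (d + 1) = 0 := by omega
            have e3 : n - d = 0 := by omega
            have c1 : Nat.choose 0 d = 0 := Nat.choose_eq_zero_of_lt (by omega)
            have c2 : Nat.choose 0 (d + 1) = 0 := Nat.choose_eq_zero_of_lt (by omega)
            rw [e1, e2, e3, c1, c2]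
        calc S.card = (S.filter (fun D => n ∈ D)).card + (S.filter (fun D => n ∉ D)).card :=
              hsplit.symm
          _ = Nat.choose (n - d) d + Nat.choose (n + 1 - (d + 1)) (d + 1) := by
              rw [hwi, h2, hwo, h1]
          _ = Nat.choose (n + 2 - (d + 1)) (d + 1) := key

/-- For `m ≥ 1` and `0 ≤ k ≤ m`, the sum over all `2k`-element subsets
`α` of `{1,…,2m}` of the hafnians of the submatrices `U₁(α)` obtained from `U₁` by
deleting the rows and columns indexed by `α` equals `C(m+k, m−k)`. -/
theorem sum_hafnian_U₁_submatrix (m k : ℕ) (hm : 0 < m) (hk : k ≤ m) :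
    ∑ α ∈ Finset.powersetCard (2 * k) (Finset.univ : Finset (Fin (2 * m))),
      hafnian ((U₁ (2 * m)).submatrix
        (fun i : {x : Fin (2 * m) // x ∉ α} => (i : Fin (2 * m)))
        (fun i : {x : Fin (2 * m) // x ∉ α} => (i : Fin (2 * m)))) =
      Nat.choose (m + k) (m - k) := by
  classical
  set T : Finset (Finset ℕ) := (Finset.range (2*m)).powerset.filter
    (fun D => D.card = m - k ∧ ∀ i ∈ D, i + 1 ∉ D ∧ i + 1 < 2*m) with hT
  have step1 : ∑ α ∈ Finset.powersetCard (2 * k) (Finset.univ : Finset (Fin (2 * m))),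
      hafnian ((U₁ (2 * m)).submatrix
        (fun i : {x : Fin (2 * m) // x ∉ α} => (i : Fin (2 * m)))
        (fun i : {x : Fin (2 * m) // x ∉ α} => (i : Fin (2 * m))))
      = ∑ α ∈ Finset.powersetCard (2 * k) (Finset.univ : Finset (Fin (2 * m))),
        (T.filter (fun D => alphaOf (2*m) D = α)).card := by
    apply Finset.sum_congr rfl
    intro α hα
    have hαcard : α.card = 2 * k := (Finset.mem_powersetCard.mp hα).2
    refine (hafnian_01 _ ?_ ?_).trans
      (bij_card (2*m) α (m - k) (by omega) _ ?_ _ ?_)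
    · intro i j
      simp only [Matrix.submatrix_apply, U₁]
      exact if_congr or_comm rfl rfl
    · intro i j
      simp only [Matrix.submatrix_apply, U₁]
      split <;> omega
    · intro σ
      rw [Finset.mem_filter]
      simp only [Finset.mem_filter, Finset.mem_univ, true_and,
        Matrix.submatrix_apply, U₁]
      apply and_congr_right
      intro _
      apply forall_congr'
      intro i
      by_cases h : ((i : Fin (2*m)) : ℕ) + 1 = ((σ i : Fin (2*m)) : ℕ) ∨
          ((σ i : Fin (2*m)) : ℕ) + 1 = ((i : Fin (2*m)) : ℕ)
      · simp [h]
      · simp [h]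
    · intro D
      simp only [hT, Finset.mem_filter, Finset.mem_powerset]
      tauto
  have step2 : ∑ α ∈ Finset.powersetCard (2 * k) (Finset.univ : Finset (Fin (2 * m))),
      (T.filter (fun D => alphaOf (2*m) D = α)).card = T.card := by
    refine (Finset.card_eq_sum_card_fiberwise ?_).symm
    intro D hD
    simp only [Finset.mem_coe, hT, Finset.mem_filter, Finset.mem_powerset] at hD
    obtain ⟨hsub, hcard, hsp⟩ := hD
    rw [Finset.mem_coe, Finset.mem_powersetCard]
    refine ⟨Finset.subset_univ _, ?_⟩
    rw [card_alphaOf (2*m) D (fun i hi => Finset.mem_range.mp (hsub hi)) hsp, hcard]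
    omega
  have step3 : T.card = Nat.choose (m + k) (m - k) := by
    rw [hT, sparse_count]
    congr 1
    omega
  rw [step1, step2, step3]
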